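/- Let n ≥ 2 and let G be an n×n positive semidefinite matrix with unit diagonal such that |G_{i,j}| > (n−2)/(n−1) for all i ≠ j. Then G is not (n−1)-incoherent. -/

import Mathlib

open Matrix BigOperators Finset ComplexOrder

/-- Circulant matrix: entries depend only on `(j - i) mod n`. -/
def IsCirc {n : ℕ} (G : Matrix (Fin n) (Fin n) ℂ) : Prop :=
  ∃ g : Fin n → ℂ, ∀ i j, G i j = g (j - i)

/-- The cyclic shift permutation matrix `P` with `P i j = 1` iff `j = i + 1 (mod n)`. -/
def cyclicShift (n : ℕ) [NeZero n] : Matrix (Fin n) (Fin n) ℂ :=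
  Matrix.of fun i j => if j = i + 1 then 1 else 0

/-- `k`-incoherent PSD matrix. -/
def KIncoherent {n : ℕ} (k : ℕ) (X : Matrix (Fin n) (Fin n) ℂ) : Prop :=
  ∃ (m : ℕ) (c : Fin m → ℝ) (ψ : Fin m → (Fin n → ℂ)),
    (∀ j, 0 ≤ c j) ∧
    (∀ j, (Finset.univ.filter fun i => ψ j i ≠ 0).card ≤ k) ∧
    X = ∑ j, (c j : ℂ) • Matrix.vecMulVec (ψ j) (star (ψ j))

/-- `(n-1)`-locally PSD: every principal submatrix obtained by deleting one row and the
corresponding column is positive semidefinite. -/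
def LocallyPSD {n : ℕ} (Y : Matrix (Fin n) (Fin n) ℂ) : Prop :=
  ∀ i : Fin n,
    Matrix.PosSemidef (Y.submatrix (fun k : {j : Fin n // j ≠ i} => (k : Fin n))
      (fun k : {j : Fin n // j ≠ i} => (k : Fin n)))

/-- The (unitary) discrete Fourier transform matrix. -/
noncomputable def dftMatrix (n : ℕ) : Matrix (Fin n) (Fin n) ℂ :=
  Matrix.of fun j k =>
    Complex.exp (2 * Real.pi * Complex.I * (j.val * k.val) / n) / Real.sqrt n

theorem stmt13 {n : ℕ} (hn : 2 ≤ n) (G : Matrix (Fin n) (Fin n) ℂ)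
    (hG : G.PosSemidef) (hdiag : ∀ i, G i i = 1)
    (h : ∀ i j, i ≠ j → ((n : ℝ) - 2) / ((n : ℝ) - 1) < ‖G i j‖) :
    ¬ KIncoherent (n - 1) G := by
  rintro ⟨m, c, ψ, hc, hsupp, hX⟩
  have hn1 : (1:ℝ) ≤ (n:ℝ) - 1 := by
    have : (2:ℝ) ≤ n := by exact_mod_cast hn
    linarith
  -- entrywise formula
  have hentry : ∀ i j, G i j = ∑ t, (c t : ℂ) * (ψ t i * (starRingEnd ℂ) (ψ t j)) := by
    intro i j
    rw [hX]
    simp [Matrix.sum_apply, Matrix.vecMulVec_apply, Pi.star_apply, mul_assoc]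
  -- abs bound
  have habs : ∀ i j, ‖G i j‖ ≤ ∑ t, c t * (‖ψ t i‖ * ‖ψ t j‖) := by
    intro i j
    rw [hentry i j]
    refine le_trans (norm_sum_le _ _) (le_of_eq ?_)
    refine Finset.sum_congr rfl fun t _ => ?_
    rw [norm_mul, norm_mul, Complex.norm_real, Real.norm_eq_abs, Complex.norm_conj,
      abs_of_nonneg (hc t)]
  set A : Fin m → ℝ := fun t => ∑ i, ‖ψ t i‖ with hA
  set B : Fin m → ℝ := fun t => ∑ i, ‖ψ t i‖ ^ 2 with hB
  -- trace identity
  have htrace : ∑ t, c t * B t = n := by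
    have hdi : ∀ i : Fin n, ∑ t, c t * ‖ψ t i‖ ^ 2 = 1 := by
      intro i
      have := hentry i i
      rw [hdiag i] at this
      have hre := congrArg Complex.re this.symm
      simpa [Complex.mul_conj, ← Complex.normSq_eq_norm_sq, mul_comm] using hre
    calc ∑ t, c t * B t = ∑ t, ∑ i, c t * ‖ψ t i‖ ^ 2 := by
          simp [hB, Finset.mul_sum]
      _ = ∑ i : Fin n, ∑ t, c t * ‖ψ t i‖ ^ 2 := Finset.sum_comm
      _ = ∑ i : Fin n, (1:ℝ) := Finset.sum_congr rfl fun i _ => hdi i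
      _ = n := by simp
  -- Cauchy-Schwarz with support
  have hCS : ∀ t, A t ^ 2 ≤ ((n:ℝ) - 1) * B t := by
    intro t
    set s := Finset.univ.filter fun i => ψ t i ≠ 0 with hs
    have hAs : A t = ∑ i ∈ s, ‖ψ t i‖ := by
      rw [hA]
      refine (Finset.sum_subset (Finset.subset_univ s) fun i _ hi => ?_).symm
      simp only [hs, Finset.mem_filter, Finset.mem_univ, true_and, not_not] at hi
      simp [hi]
    have hBs : B t = ∑ i ∈ s, ‖ψ t i‖ ^ 2 := by
      rw [hB]
      refine (Finset.sum_subset (Finset.subset_univ s) fun i _ hi => ?_).symm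
      simp only [hs, Finset.mem_filter, Finset.mem_univ, true_and, not_not] at hi
      simp [hi]
    have hcard : (s.card : ℝ) ≤ (n:ℝ) - 1 := by
      have := hsupp t
      have h2 : (s.card : ℝ) ≤ ((n - 1 : ℕ) : ℝ) := by exact_mod_cast this
      have h3 : ((n - 1 : ℕ) : ℝ) = (n:ℝ) - 1 := by
        have : 1 ≤ n := le_trans one_le_two hn
        push_cast [this]; ring
      linarith
    calc A t ^ 2 = (∑ i ∈ s, ‖ψ t i‖) ^ 2 := by rw [hAs]
      _ ≤ s.card * ∑ i ∈ s, ‖ψ t i‖ ^ 2 := sq_sum_le_card_mul_sum_sq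
      _ ≤ ((n:ℝ) - 1) * B t := by
          rw [hBs]
          exact mul_le_mul_of_nonneg_right hcard (Finset.sum_nonneg fun i _ => sq_nonneg _)
  -- upper bound on total sum
  have hupper : ∑ i : Fin n, ∑ j : Fin n, ‖G i j‖ ≤ (n:ℝ) * ((n:ℝ) - 1) := by
    calc ∑ i : Fin n, ∑ j : Fin n, ‖G i j‖
        ≤ ∑ i : Fin n, ∑ j : Fin n, ∑ t, c t * (‖ψ t i‖ * ‖ψ t j‖) :=
          Finset.sum_le_sum fun i _ => Finset.sum_le_sum fun j _ => habs i j
      _ = ∑ t, c t * A t ^ 2 := by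
          have hexp : ∀ t, c t * A t ^ 2
              = ∑ i : Fin n, ∑ j : Fin n, c t * (‖ψ t i‖ * ‖ψ t j‖) := by
            intro t
            rw [hA, sq, Finset.sum_mul_sum]
            simp [Finset.mul_sum]
          have hrw : ∑ t, c t * A t ^ 2
              = ∑ t, ∑ i : Fin n, ∑ j : Fin n, c t * (‖ψ t i‖ * ‖ψ t j‖) :=
            Finset.sum_congr rfl fun t _ => hexp t
          rw [hrw]
          exact (Finset.sum_congr rfl fun i _ => Finset.sum_comm).trans Finset.sum_comm
      _ ≤ ∑ t, c t * (((n:ℝ) - 1) * B t) :=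
          Finset.sum_le_sum fun t _ => mul_le_mul_of_nonneg_left (hCS t) (hc t)
      _ = ((n:ℝ) - 1) * ∑ t, c t * B t := by
          rw [Finset.mul_sum]; refine Finset.sum_congr rfl fun t _ => by ring
      _ = (n:ℝ) * ((n:ℝ) - 1) := by rw [htrace]; ring
  -- lower bound
  have hlower : (n:ℝ) * ((n:ℝ) - 1) < ∑ i : Fin n, ∑ j : Fin n, ‖G i j‖ := by
    have hv : ∀ i : Fin n, ∑ j : Fin n, (if i = j then (1:ℝ) else ((n:ℝ)-2)/((n:ℝ)-1)) = (n:ℝ) - 1 := by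
      intro i
      have key : ∀ j : Fin n, (if i = j then (1:ℝ) else ((n:ℝ)-2)/((n:ℝ)-1))
          = (if i = j then (1:ℝ) - ((n:ℝ)-2)/((n:ℝ)-1) else 0) + ((n:ℝ)-2)/((n:ℝ)-1) := by
        intro j; by_cases hij : i = j <;> simp [hij]
      rw [Finset.sum_congr rfl fun j _ => key j, Finset.sum_add_distrib,
        Finset.sum_ite_eq, if_pos (Finset.mem_univ i)]
      have hne : (n:ℝ) - 1 ≠ 0 := by linarith
      rw [Finset.sum_const, Finset.card_univ, Fintype.card_fin, nsmul_eq_mul]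
      field_simp
      ring
    have hsum : ∑ i : Fin n, ∑ j : Fin n, (if i = j then (1:ℝ) else ((n:ℝ)-2)/((n:ℝ)-1))
        = (n:ℝ) * ((n:ℝ) - 1) := by
      rw [Finset.sum_congr rfl fun i _ => hv i]; simp [mul_comm]; ring
    haveI : Nontrivial (Fin n) := Fin.nontrivial_iff_two_le.mpr hn
    rw [← hsum]
    refine Finset.sum_lt_sum_of_nonempty Finset.univ_nonempty fun i _ => ?_
    obtain ⟨j0, hj0'⟩ := exists_ne i
    have hj0 : i ≠ j0 := hj0'.symm
    refine Finset.sum_lt_sum (fun j _ => ?_) ⟨j0, Finset.mem_univ j0, ?_⟩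
    · by_cases hij : i = j
      · subst hij; simp [hdiag i]
      · simp only [if_neg hij]
        exact le_of_lt (h i j hij)
    · simp only [if_neg hj0]
      exact h i j0 hj0
  linarith
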